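/- For every J ⊆ {1,…,n}, the derivation module Der(A_J) is a free S-module with basis ρ_1^J,…,ρ_n^J. -/

import Mathlib

open MvPolynomial

noncomputable section

/-- `varx K n i` is the variable `x_i` for `1 ≤ i ≤ n`, with the convention `x_0 = 0`. -/
def varx (K : Type*) [Field K] (n : ℕ) (i : Fin (n + 1)) : MvPolynomial (Fin n) K :=
  if h : (i : ℕ) = 0 then 0 else X ⟨(i : ℕ) - 1, by have := i.isLt; omega⟩

/-- The linear form `α_{i,j}`: equal to `x_j` when `i = 0` and `x_i − x_j` when `i ≥ 1`. -/
def alp (K : Type*) [Field K] (n : ℕ) (i j : Fin (n + 1)) : MvPolynomial (Fin n) K :=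
  if i = 0 then varx K n j else varx K n i - varx K n j

/-- Defining polynomial `Q(A)` of an arrangement encoded by its index pairs. -/
def QA (K : Type*) [Field K] (n : ℕ) (A : Finset (Fin (n + 1) × Fin (n + 1))) :
    MvPolynomial (Fin n) K :=
  ∏ p ∈ A, alp K n p.1 p.2

/-- The module of derivations `θ` with `q ∣ θ(q)`; for `q = Q(A)` this is `Der(A)`. -/
def DerOf (K : Type*) [Field K] (n : ℕ) (q : MvPolynomial (Fin n) K) :
    Submodule (MvPolynomial (Fin n) K)
      (Derivation K (MvPolynomial (Fin n) K) (MvPolynomial (Fin n) K)) where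
  carrier := {θ | q ∣ θ q}
  add_mem' := by
    intro a b ha hb
    simpa using dvd_add ha hb
  zero_mem' := by simp
  smul_mem' := by
    intro c θ hθ
    simpa [smul_eq_mul] using Dvd.dvd.mul_left hθ c

/-- `notInJ J q` says that the variable index represented by `q ∈ {1,…,n}` is not in `J`. -/
def notInJ {n : ℕ} (J : Finset (Fin n)) (q : Fin (n + 1)) : Prop :=
  ∀ j : Fin n, (j : ℕ) + 1 = (q : ℕ) → j ∉ J

instance {n : ℕ} (J : Finset (Fin n)) (q : Fin (n + 1)) : Decidable (notInJ J q) := by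
  unfold notInJ; infer_instance

/-- The arrangement `A_J = {H_{j,i} : j ∉ J, j < i ≤ n} ∪ {H_{0,j} : j ∉ J}`. -/
def AJArr (n : ℕ) (J : Finset (Fin n)) : Finset (Fin (n + 1) × Fin (n + 1)) :=
  Finset.univ.filter fun p : Fin (n + 1) × Fin (n + 1) =>
    p.1 < p.2 ∧ ((p.1 = 0 ∧ notInJ J p.2) ∨ (p.1 ≠ 0 ∧ notInJ J p.1))

/-- The derivation `ρ_i^J`. -/
def rhoJ (K : Type*) [Field K] (n : ℕ) (J : Finset (Fin n)) (i : Fin n) :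
    Derivation K (MvPolynomial (Fin n) K) (MvPolynomial (Fin n) K) :=
  if i ∈ J then
    ((∏ j ∈ Finset.univ.filter fun j : Fin n => j ∉ J ∧ j < i,
        (X j - X i) : MvPolynomial (Fin n) K)) • pderiv i
  else
    ∑ k ∈ Finset.univ.filter fun k : Fin n => i ≤ k,
      (((∏ j ∈ Finset.univ.filter fun j : Fin n => j ∉ J ∧ j < i,
          (X j - X k)) * X k : MvPolynomial (Fin n) K)) • pderiv k

namespace St6


theorem prod_dvd_of_primes {α : Type*} [CommMonoidWithZero α] {ι : Type*} [DecidableEq ι]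
    (s : Finset ι) (f : ι → α) (hp : ∀ i ∈ s, Prime (f i))
    (hnd : ∀ i ∈ s, ∀ j ∈ s, i ≠ j → ¬ f i ∣ f j) {z : α}
    (hdvd : ∀ i ∈ s, f i ∣ z) : (∏ i ∈ s, f i) ∣ z := by
  induction s using Finset.cons_induction generalizing z with
  | empty => simp
  | cons a s ha ih =>
    obtain ⟨w, rfl⟩ := hdvd a (Finset.mem_cons_self a s)
    rw [Finset.prod_cons]
    refine mul_dvd_mul_left _ (ih (fun i hi => hp i (Finset.mem_cons_of_mem hi))
      (fun i hi j hj hij => hnd i (Finset.mem_cons_of_mem hi) j (Finset.mem_cons_of_mem hj) hij)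
      (fun i hi => ?_))
    have h1 : f i ∣ f a * w := hdvd i (Finset.mem_cons_of_mem hi)
    have h2 : ¬ f i ∣ f a := by
      refine hnd i (Finset.mem_cons_of_mem hi) a (Finset.mem_cons_self a s) ?_
      rintro rfl; exact ha hi
    exact ((hp i (Finset.mem_cons_of_mem hi)).dvd_or_dvd h1).resolve_left h2

theorem dvd_prod_sub_prod {α ι : Type*} [CommRing α] (s : Finset ι) (f g : ι → α) {d : α}
    (h : ∀ i ∈ s, d ∣ f i - g i) : d ∣ (∏ i ∈ s, f i) - ∏ i ∈ s, g i := by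
  induction s using Finset.cons_induction with
  | empty => simp
  | cons a s ha ih =>
    rw [Finset.prod_cons, Finset.prod_cons]
    have key : f a * ∏ i ∈ s, f i - g a * ∏ i ∈ s, g i
        = f a * ((∏ i ∈ s, f i) - ∏ i ∈ s, g i) + (f a - g a) * ∏ i ∈ s, g i := by ring
    rw [key]
    exact dvd_add ((ih (fun i hi => h i (Finset.mem_cons_of_mem hi))).mul_left _)
      ((h a (Finset.mem_cons_self a s)).mul_right _)

theorem derivation_sum_apply {R A M : Type*} [CommSemiring R] [CommSemiring A] [Algebra R A]
    [AddCommMonoid M] [Module R M] [Module A M] {ι : Type*} (s : Finset ι)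
    (D : ι → Derivation R A M) (x : A) :
    (∑ i ∈ s, D i) x = ∑ i ∈ s, D i x := by
  induction s using Finset.cons_induction with
  | empty => rfl
  | cons a s ha ih => rw [Finset.sum_cons, Finset.sum_cons, Derivation.add_apply, ih]

theorem prod_dvd_derivation_prod {R A : Type*} [CommRing R] [CommRing A] [Algebra R A]
    {ι : Type*} (D : Derivation R A A) (s : Finset ι) (g : ι → A)
    (h : ∀ i ∈ s, g i ∣ D (g i)) : (∏ i ∈ s, g i) ∣ D (∏ i ∈ s, g i) := by
  induction s using Finset.cons_induction with
  | empty => simp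
  | cons a s ha ih =>
    rw [Finset.prod_cons, Derivation.leibniz, smul_eq_mul, smul_eq_mul]
    refine dvd_add (mul_dvd_mul_left _ (ih (fun i hi => h i (Finset.mem_cons_of_mem hi)))) ?_
    obtain ⟨t, ht⟩ := h a (Finset.mem_cons_self a s)
    exact ⟨t, by rw [ht]; ring⟩

set_option linter.unusedSectionVars false
variable {K : Type*} [Field K] [CharZero K] {n : ℕ}

theorem varx_zero : varx K n 0 = 0 := by simp [varx]

theorem varx_succ (i : Fin n) : varx K n i.succ = X i := by
  rw [varx, dif_neg (by simp [Fin.val_succ])]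
  congr 1

theorem exists_succ_eq {q : Fin (n + 1)} (hq : q ≠ 0) : ∃ i : Fin n, q = i.succ :=
  ⟨q.pred hq, (Fin.succ_pred q hq).symm⟩

theorem eval_varx (v : Fin n → K) (q : Fin (n + 1)) :
    eval v (varx K n q) =
      if h : (q : ℕ) = 0 then 0 else v ⟨(q : ℕ) - 1, by have := q.isLt; omega⟩ := by
  rw [varx]
  split_ifs with h
  · simp
  · simp

theorem alp_not_dvd {p p' : Fin (n + 1) × Fin (n + 1)} (hp : p.1 < p.2) (hp' : p'.1 < p'.2)
    (hne : p ≠ p') : ¬ alp K n p.1 p.2 ∣ alp K n p'.1 p'.2 := by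
  set v' : Fin (n + 1) → K := fun q => if q = p.2 then ((p.1 : ℕ) : K) else ((q : ℕ) : K) with hv'
  set v : Fin n → K := fun i => v' i.succ with hv
  have hv'eval : ∀ q : Fin (n + 1), eval v (varx K n q) = v' q := by
    intro q
    rw [eval_varx]
    split_ifs with h
    · have : q = 0 := Fin.ext h
      subst this
      have : (0 : Fin (n + 1)) ≠ p.2 := by
        intro h0
        have := hp
        rw [← h0] at this
        exact absurd this (by simp [Fin.lt_def])
      simp [hv', this]
    · have hqs : (⟨(q : ℕ) - 1, by have := q.isLt; omega⟩ : Fin n).succ = q :=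
        Fin.ext (by simp [Fin.val_succ]; omega)
      rw [hv]
      simp only []
      rw [hqs]
  have heval : ∀ r : Fin (n + 1) × Fin (n + 1), eval v (alp K n r.1 r.2) =
      if r.1 = 0 then v' r.2 else v' r.1 - v' r.2 := by
    intro r
    rw [alp]
    split_ifs with h
    · rw [hv'eval]
    · rw [map_sub, hv'eval, hv'eval]
  intro hdvd
  have hmap := map_dvd (eval v) hdvd
  rw [heval, heval] at hmap
  -- the divisor evaluates to 0
  have h2ne0 : p.2 ≠ 0 := by
    intro h0; rw [h0] at hp; exact absurd hp (by simp [Fin.lt_def])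
  have hzero : (if p.1 = 0 then v' p.2 else v' p.1 - v' p.2) = 0 := by
    split_ifs with h
    · simp only [hv', if_pos rfl, h]
      simp
    · have h1 : v' p.2 = ((p.1 : ℕ) : K) := by simp [hv']
      have hne12 : p.1 ≠ p.2 := ne_of_lt hp
      have h2 : v' p.1 = ((p.1 : ℕ) : K) := by simp [hv', if_neg hne12]
      rw [h1, h2, sub_self]
  rw [hzero, zero_dvd_iff] at hmap
  -- the dividend evaluates to nonzero
  have hcast : ∀ a b : ℕ, a ≠ b → ((a : K) ≠ (b : K)) := fun a b h => by
    exact_mod_cast h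
  have h2'ne0 : (p'.2 : ℕ) ≠ 0 := by
    intro h0
    have := hp'
    rw [Fin.lt_def, h0] at this; omega
  revert hmap
  split_ifs with h
  · -- p'.1 = 0 : dividend is v' p'.2
    by_cases hc : p'.2 = p.2
    · have hp1 : p.1 ≠ 0 := by
        intro h0
        apply hne
        have : p.1 = p'.1 := by rw [h0, h]
        exact Prod.ext this hc.symm
      simp only [hv', if_pos hc]
      exact fun hh => hp1 (by simpa using hh)
    · simp only [hv', if_neg hc]
      exact fun hh => h2'ne0 (by exact_mod_cast hh)
  · -- p'.1 ≠ 0 : dividend is v' p'.1 - v' p'.2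
    rw [sub_eq_zero]
    by_cases hc1 : p'.1 = p.2
    · have hc2 : p'.2 ≠ p.2 := by
        intro h0
        have := hp'
        rw [hc1, ← h0] at this
        exact absurd this (lt_irrefl _)
      simp only [hv', if_pos hc1, if_neg hc2]
      intro hh
      have : (p.1 : ℕ) = (p'.2 : ℕ) := by exact_mod_cast hh
      have hlt : (p.1 : ℕ) < (p'.2 : ℕ) := by
        have a1 := Fin.lt_def.mp hp
        have a2 := Fin.lt_def.mp hp'
        rw [Fin.lt_def] at *
        omega
      omega
    · by_cases hc2 : p'.2 = p.2
      · have hne11 : p'.1 ≠ p.1 := by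
          intro h0
          exact hne (Prod.ext h0.symm hc2.symm)
        simp only [hv', if_neg hc1, if_pos hc2]
        intro hh
        exact hne11 (Fin.ext (by exact_mod_cast hh))
      · simp only [hv', if_neg hc1, if_neg hc2]
        intro hh
        have : (p'.1 : ℕ) = (p'.2 : ℕ) := by exact_mod_cast hh
        have := Fin.lt_def.mp hp'
        omega

theorem prime_X_mv (k : Fin n) : Prime (X k : MvPolynomial (Fin n) K) := by
  cases n with
  | zero => exact k.elim0
  | succ m =>
    let φ : MvPolynomial (Fin (m + 1)) K ≃ₐ[K] Polynomial (MvPolynomial (Fin m) K) :=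
      (renameEquiv K (finSuccEquiv' k)).trans (optionEquivLeft K (Fin m))
    refine (MulEquiv.prime_iff φ.toRingEquiv.toMulEquiv).mp ?_
    have : φ (X k) = Polynomial.X := by
      simp [φ, renameEquiv, finSuccEquiv'_at, optionEquivLeft_X_none]
    rw [show φ.toRingEquiv.toMulEquiv (X k) = φ (X k) from rfl, this]
    exact Polynomial.prime_X

theorem prime_X_sub_X (j k : Fin n) (hjk : j ≠ k) :
    Prime (X j - X k : MvPolynomial (Fin n) K) := by
  cases n with
  | zero => exact k.elim0
  | succ m =>
    let φ : MvPolynomial (Fin (m + 1)) K ≃ₐ[K] Polynomial (MvPolynomial (Fin m) K) :=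
      (renameEquiv K (finSuccEquiv' k)).trans (optionEquivLeft K (Fin m))
    refine (MulEquiv.prime_iff φ.toRingEquiv.toMulEquiv).mp ?_
    obtain ⟨j', hj'⟩ : ∃ j', finSuccEquiv' k j = some j' := by
      have : finSuccEquiv' k j ≠ none := by
        rw [← finSuccEquiv'_at k]
        exact fun h => hjk ((finSuccEquiv' k).injective h)
      exact Option.ne_none_iff_exists'.mp this
    have : φ (X j - X k) = -(Polynomial.X - Polynomial.C (X j')) := by
      rw [map_sub]
      have h1 : φ (X j) = Polynomial.C (X j') := by
        simp [φ, renameEquiv, hj', optionEquivLeft_X_some]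
      have h2 : φ (X k) = Polynomial.X := by
        simp [φ, renameEquiv, finSuccEquiv'_at, optionEquivLeft_X_none]
      rw [h1, h2]; ring
    rw [show φ.toRingEquiv.toMulEquiv (X j - X k) = φ (X j - X k) from rfl, this]
    exact (Polynomial.prime_X_sub_C _).neg

theorem alp_prime {p : Fin (n + 1) × Fin (n + 1)} (hp : p.1 < p.2) :
    Prime (alp K n p.1 p.2) := by
  have h2ne0 : p.2 ≠ 0 := by
    intro h0; rw [h0] at hp; exact absurd hp (by simp [Fin.lt_def])
  obtain ⟨b, hb⟩ := exists_succ_eq h2ne0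
  by_cases h1 : p.1 = 0
  · rw [alp, if_pos h1, hb, varx_succ]
    exact prime_X_mv b
  · obtain ⟨a, ha⟩ := exists_succ_eq h1
    rw [alp, if_neg h1, hb, ha, varx_succ, varx_succ]
    refine prime_X_sub_X a b ?_
    intro h; apply ne_of_lt hp; rw [ha, hb, h]
theorem notInJ_succ {J : Finset (Fin n)} (i : Fin n) : notInJ J i.succ ↔ i ∉ J := by
  constructor
  · intro h; exact h i (by simp [Fin.val_succ])
  · intro h j hj
    have : j = i := Fin.ext (by rw [Fin.val_succ] at hj; omega)
    subst this; exact h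

theorem succ_mem_A {J : Finset (Fin n)} {a b : Fin n} (hab : a < b) (ha : a ∉ J) :
    (a.succ, b.succ) ∈ AJArr n J := by
  rw [AJArr, Finset.mem_filter]
  exact ⟨Finset.mem_univ _, Fin.succ_lt_succ_iff.mpr hab,
    Or.inr ⟨Fin.succ_ne_zero a, (notInJ_succ a).mpr ha⟩⟩

theorem zero_succ_mem_A {J : Finset (Fin n)} {b : Fin n} (hb : b ∉ J) :
    ((0 : Fin (n + 1)), b.succ) ∈ AJArr n J := by
  rw [AJArr, Finset.mem_filter]
  exact ⟨Finset.mem_univ _, Fin.succ_pos b, Or.inl ⟨rfl, (notInJ_succ b).mpr hb⟩⟩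

theorem mem_A_lt {J : Finset (Fin n)} {p : Fin (n + 1) × Fin (n + 1)} (hp : p ∈ AJArr n J) :
    p.1 < p.2 := ((Finset.mem_filter.mp hp).2).1

def cpoly (J : Finset (Fin n)) (i m : Fin n) : MvPolynomial (Fin n) K :=
  ∏ j ∈ Finset.univ.filter fun j : Fin n => j ∉ J ∧ j < i, (X j - X m)

theorem rhoJ_apply_X (J : Finset (Fin n)) (i m : Fin n) :
    rhoJ K n J i (X m) =
      if i ∈ J then (if i = m then cpoly (K := K) J i i else 0)
      else (if i ≤ m then cpoly (K := K) J i m * X m else 0) := by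
  rw [rhoJ]
  split_ifs with hiJ him him
  · subst him
    rw [Derivation.smul_apply, pderiv_X_self, smul_eq_mul, mul_one, cpoly]
  · rw [Derivation.smul_apply, pderiv_X_of_ne (fun h => him h.symm), smul_eq_mul,
      mul_zero]
  · rw [derivation_sum_apply, Finset.sum_eq_single m]
    · rw [Derivation.smul_apply, pderiv_X_self, smul_eq_mul, mul_one, cpoly]
    · intro b _ hbm
      rw [Derivation.smul_apply, pderiv_X_of_ne (fun h => hbm h.symm), smul_zero]
    · intro hm
      exact absurd (Finset.mem_filter.mpr ⟨Finset.mem_univ m, him⟩) hm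
  · rw [derivation_sum_apply, Finset.sum_eq_zero]
    intro b hb
    have hbm : b ≠ m := by
      intro h; subst h
      exact him (Finset.mem_filter.mp hb).2
    rw [Derivation.smul_apply, pderiv_X_of_ne (Ne.symm hbm), smul_zero]

theorem rhoJ_apply_X_lt {J : Finset (Fin n)} {i m : Fin n} (h : m < i) :
    rhoJ K n J i (X m) = 0 := by
  rw [rhoJ_apply_X]
  split_ifs with h1 h2 h3
  · exact absurd h2 (ne_of_gt h)
  · rfl
  · exact absurd h3 (not_le.mpr h)
  · rfl

def diagSet (J : Finset (Fin n)) (k : Fin n) : Finset (Fin n) :=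
  Finset.univ.filter fun j => (j ∉ J ∧ j < k) ∨ (j = k ∧ k ∉ J)

def fac (k j : Fin n) : MvPolynomial (Fin n) K :=
  if j = k then X k else X j - X k

def facPair (k j : Fin n) : Fin (n + 1) × Fin (n + 1) :=
  if j = k then (0, k.succ) else (j.succ, k.succ)

theorem fac_eq_alp (k j : Fin n) :
    fac (K := K) k j = alp K n (facPair k j).1 (facPair k j).2 := by
  by_cases h : j = k
  · simp [fac, facPair, alp, h, varx_succ]
  · simp [fac, facPair, alp, h, varx_succ, Fin.succ_ne_zero]

theorem mem_diagSet {J : Finset (Fin n)} {k j : Fin n} (hj : j ∈ diagSet J k) :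
    (j ∉ J ∧ j < k) ∨ (j = k ∧ k ∉ J) := (Finset.mem_filter.mp hj).2

theorem facPair_lt {J : Finset (Fin n)} {k j : Fin n} (hj : j ∈ diagSet J k) :
    (facPair k j).1 < (facPair k j).2 := by
  by_cases h : j = k
  · rw [facPair, if_pos h]
    exact Fin.succ_pos k
  · have hlt : j < k := by
      rcases mem_diagSet hj with ⟨_, h2⟩ | ⟨h1, _⟩
      · exact h2
      · exact absurd h1 h
    rw [facPair, if_neg h]
    exact Fin.succ_lt_succ_iff.mpr hlt

theorem facPair_injOn (k : Fin n) {j j' : Fin n} (h : j ≠ j') : facPair k j ≠ facPair k j' := by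
  by_cases h1 : j = k <;> by_cases h2 : j' = k
  · exact absurd (h1.trans h2.symm) h
  · rw [facPair, facPair, if_pos h1, if_neg h2]
    intro he
    exact Fin.succ_ne_zero j' (congrArg Prod.fst he).symm
  · rw [facPair, facPair, if_neg h1, if_pos h2]
    intro he
    exact Fin.succ_ne_zero j (congrArg Prod.fst he)
  · rw [facPair, facPair, if_neg h1, if_neg h2]
    intro he
    exact h (Fin.succ_injective n (congrArg Prod.fst he))

theorem fac_prime {J : Finset (Fin n)} {k j : Fin n} (hj : j ∈ diagSet J k) :
    Prime (fac (K := K) k j) := by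
  rw [fac_eq_alp]
  exact alp_prime (facPair_lt hj)

def diag (J : Finset (Fin n)) (k : Fin n) : MvPolynomial (Fin n) K :=
  ∏ j ∈ diagSet J k, fac (K := K) k j

theorem diag_eq (J : Finset (Fin n)) (k : Fin n) :
    diag (K := K) J k = cpoly (K := K) J k k * (if k ∈ J then 1 else X k) := by
  rw [diag, diagSet, Finset.filter_or, Finset.prod_union]
  · congr 1
    · rw [cpoly]
      refine Finset.prod_congr rfl fun j hj => ?_
      have : j < k := (Finset.mem_filter.mp hj).2.2
      rw [fac, if_neg (ne_of_lt this)]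
    · have h2 : (Finset.univ.filter fun j : Fin n => j = k ∧ k ∉ J)
          = if k ∈ J then (∅ : Finset (Fin n)) else {k} := by
        ext j
        split_ifs with h <;> simp [h]
      rw [h2]
      split_ifs with h
      · simp
      · rw [Finset.prod_singleton, fac, if_pos rfl]
  · rw [Finset.disjoint_left]
    intro j hj1 hj2
    have ha : j < k := (Finset.mem_filter.mp hj1).2.2
    have hb : j = k := (Finset.mem_filter.mp hj2).2.1
    exact absurd hb (ne_of_lt ha)

theorem rhoJ_diag (J : Finset (Fin n)) (k : Fin n) :
    rhoJ K n J k (X k) = diag (K := K) J k := by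
  rw [rhoJ_apply_X, diag_eq]
  by_cases h : k ∈ J
  · rw [if_pos h, if_pos h, if_pos rfl, mul_one]
  · rw [if_neg h, if_neg h, if_pos (le_refl k)]

theorem diag_ne_zero (J : Finset (Fin n)) (k : Fin n) : diag (K := K) J k ≠ 0 := by
  rw [diag]
  exact Finset.prod_ne_zero_iff.mpr fun j hj => (fac_prime hj).ne_zero

theorem mem_DerOf_iff {q θ} :
    θ ∈ DerOf K n q ↔ q ∣ θ q := Iff.rfl

theorem alp_dvd_deriv {J : Finset (Fin n)}
    {θ : Derivation K (MvPolynomial (Fin n) K) (MvPolynomial (Fin n) K)}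
    (hθ : θ ∈ DerOf K n (QA K n (AJArr n J)))
    {p : Fin (n + 1) × Fin (n + 1)} (hp : p ∈ AJArr n J) :
    alp K n p.1 p.2 ∣ θ (alp K n p.1 p.2) := by
  have hQ : QA K n (AJArr n J) ∣ θ (QA K n (AJArr n J)) := hθ
  set A := AJArr n J with hA
  set R : MvPolynomial (Fin n) K := ∏ q ∈ A.erase p, alp K n q.1 q.2 with hRdef
  have hQeq : QA K n A = alp K n p.1 p.2 * R := (Finset.mul_prod_erase A _ hp).symm
  have hprime : Prime (alp K n p.1 p.2) := alp_prime (mem_A_lt hp)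
  have hR : ¬ alp K n p.1 p.2 ∣ R := by
    intro hd
    obtain ⟨q, hq, hdq⟩ := (hprime.dvd_finset_prod_iff _).mp hd
    exact alp_not_dvd (mem_A_lt hp) (mem_A_lt (Finset.mem_of_mem_erase hq))
      (fun h => (Finset.ne_of_mem_erase hq) h.symm) hdq
  have h1 : alp K n p.1 p.2 ∣ R * θ (alp K n p.1 p.2) := by
    have hdQ : alp K n p.1 p.2 ∣ θ (QA K n A) := dvd_trans ⟨R, hQeq⟩ hQ
    have hleib : θ (QA K n A) = alp K n p.1 p.2 * θ R + R * θ (alp K n p.1 p.2) := by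
      rw [hQeq, Derivation.leibniz, smul_eq_mul, smul_eq_mul]
    have : R * θ (alp K n p.1 p.2) = θ (QA K n A) - alp K n p.1 p.2 * θ R := by
      rw [hleib]; ring
    rw [this]
    exact dvd_sub hdQ (Dvd.intro _ rfl)
  exact (hprime.dvd_or_dvd h1).resolve_left hR

theorem alp_dvd_rhoJ (J : Finset (Fin n)) (i : Fin n) {p : Fin (n + 1) × Fin (n + 1)}
    (hp : p ∈ AJArr n J) : alp K n p.1 p.2 ∣ rhoJ K n J i (alp K n p.1 p.2) := by
  obtain ⟨-, hlt, hcase⟩ := Finset.mem_filter.mp hp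
  have h2ne0 : p.2 ≠ 0 := by
    intro h0; rw [h0] at hlt; exact absurd hlt (by simp [Fin.lt_def])
  obtain ⟨b, hb⟩ := exists_succ_eq h2ne0
  rcases hcase with ⟨h1, hJ2⟩ | ⟨h1, hJ1⟩
  · have hbJ : b ∉ J := (notInJ_succ b).mp (hb ▸ hJ2)
    rw [alp, if_pos h1, hb, varx_succ, rhoJ_apply_X]
    split_ifs with hiJ him him
    · exact absurd (him ▸ hiJ) hbJ
    · exact dvd_zero _
    · exact dvd_mul_left _ _
    · exact dvd_zero _
  · obtain ⟨a, ha⟩ := exists_succ_eq h1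
    have haJ : a ∉ J := (notInJ_succ a).mp (ha ▸ hJ1)
    have hab : a < b := by
      rw [ha, hb] at hlt; exact Fin.succ_lt_succ_iff.mp hlt
    rw [alp, if_neg h1, hb, ha, varx_succ, varx_succ, map_sub, rhoJ_apply_X, rhoJ_apply_X]
    by_cases hiJ : i ∈ J
    · have hia : i ≠ a := fun h => haJ (h ▸ hiJ)
      rw [if_pos hiJ, if_pos hiJ, if_neg hia]
      by_cases hib : i = b
      · subst hib
        rw [if_pos rfl, zero_sub]
        refine dvd_neg.mpr ?_
        rw [cpoly]
        exact Finset.dvd_prod_of_mem _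
          (Finset.mem_filter.mpr ⟨Finset.mem_univ a, haJ, hab⟩)
      · rw [if_neg hib, sub_zero]
        exact dvd_zero _
    · rw [if_neg hiJ, if_neg hiJ]
      by_cases hia : i ≤ a
      · have hib : i ≤ b := le_trans hia (le_of_lt hab)
        rw [if_pos hia, if_pos hib]
        have key : cpoly (K := K) J i a * X a - cpoly (K := K) J i b * X b
            = cpoly (K := K) J i a * (X a - X b)
              + (cpoly (K := K) J i a - cpoly (K := K) J i b) * X b := by ring
        rw [key]
        refine dvd_add (Dvd.dvd.mul_left dvd_rfl _) (Dvd.dvd.mul_right ?_ _)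
        rw [cpoly, cpoly]
        refine dvd_prod_sub_prod _ _ _ fun j _ => ?_
        exact ⟨-1, by ring⟩
      · by_cases hib : i ≤ b
        · rw [if_neg hia, if_pos hib, zero_sub]
          refine dvd_neg.mpr (Dvd.dvd.mul_right ?_ _)
          rw [cpoly]
          exact Finset.dvd_prod_of_mem _
            (Finset.mem_filter.mpr ⟨Finset.mem_univ a, haJ, not_le.mp hia⟩)
        · rw [if_neg hia, if_neg hib, sub_zero]
          exact dvd_zero _

theorem rhoJ_mem (J : Finset (Fin n)) (i : Fin n) :
    rhoJ K n J i ∈ DerOf K n (QA K n (AJArr n J)) :=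
  prod_dvd_derivation_prod (rhoJ K n J i) (AJArr n J) (fun p => alp K n p.1 p.2)
    (fun p hp => alp_dvd_rhoJ J i hp)

end St6

set_option maxHeartbeats 2000000 in
theorem statement6 (K : Type*) [Field K] [CharZero K] (n : ℕ) (hn : 0 < n)
    (J : Finset (Fin n)) :
    ∃ b : Module.Basis (Fin n) (MvPolynomial (Fin n) K) (DerOf K n (QA K n (AJArr n J))),
      ∀ i : Fin n,
        (b i : Derivation K (MvPolynomial (Fin n) K) (MvPolynomial (Fin n) K)) =
          rhoJ K n J i := by
  classical
  let Φ : (Fin n → MvPolynomial (Fin n) K) →ₗ[MvPolynomial (Fin n) K] (DerOf K n (QA K n (AJArr n J))) :=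
    { toFun := fun F => ⟨∑ i : Fin n, F i • rhoJ K n J i,
        Submodule.sum_mem _ fun i _ => Submodule.smul_mem _ _ (St6.rhoJ_mem J i)⟩
      map_add' := fun F G => by
        apply Subtype.ext
        push_cast [Submodule.coe_add]
        simp [add_smul, Finset.sum_add_distrib]
      map_smul' := fun c F => by
        apply Subtype.ext
        simp [smul_smul, Finset.smul_sum] }
  have hΦval : ∀ F : Fin n → MvPolynomial (Fin n) K, (Φ F : Derivation K (MvPolynomial (Fin n) K) (MvPolynomial (Fin n) K)) = ∑ i : Fin n, F i • rhoJ K n J i :=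
    fun F => rfl
  have hinj : Function.Injective Φ := by
    rw [injective_iff_map_eq_zero]
    intro F hF0
    have hsum : (∑ i : Fin n, F i • rhoJ K n J i) = 0 := by
      have h := Subtype.ext_iff.mp hF0
      rwa [hΦval, ZeroMemClass.coe_zero] at h
    funext i
    have key : ∀ v : ℕ, ∀ i : Fin n, (i : ℕ) = v → F i = 0 := by
      intro v
      induction v using Nat.strong_induction_on with
      | _ v ih =>
        intro i hiv
        have happ : (∑ j : Fin n, F j • rhoJ K n J j) (X i) = 0 := by
          rw [hsum, Derivation.zero_apply]
        rw [St6.derivation_sum_apply, Finset.sum_eq_single i] at happ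
        · rw [Derivation.smul_apply, St6.rhoJ_diag, smul_eq_mul] at happ
          rcases mul_eq_zero.mp happ with h | h
          · exact h
          · exact absurd h (St6.diag_ne_zero J i)
        · intro j _ hji
          rcases lt_or_gt_of_ne hji with hlt | hgt
          · have : F j = 0 := ih (j : ℕ) (by rw [← hiv]; exact Fin.lt_def.mp hlt) j rfl
            rw [this, zero_smul, Derivation.zero_apply]
          · rw [Derivation.smul_apply, St6.rhoJ_apply_X_lt hgt, smul_zero]
        · intro h; exact absurd (Finset.mem_univ i) h
    exact key (i : ℕ) i rfl
  have hsurj : Function.Surjective Φ := by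
    intro θ
    have claim : ∀ m : ℕ, ∃ F : Fin n → MvPolynomial (Fin n) K,
        (∀ i : Fin n, m ≤ (i : ℕ) → F i = 0) ∧
        ∀ i : Fin n, (i : ℕ) < m →
          ((θ : Derivation K (MvPolynomial (Fin n) K) (MvPolynomial (Fin n) K)) - ∑ j : Fin n, F j • rhoJ K n J j) (X i) = 0 := by
      intro m
      induction m with
      | zero => exact ⟨0, fun i _ => rfl, fun i h => absurd h (Nat.not_lt_zero _)⟩
      | succ m ihm =>
        obtain ⟨F, h0, h1⟩ := ihm
        by_cases hm : m < n
        · set k : Fin n := ⟨m, hm⟩ with hk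
          set θ' : Derivation K (MvPolynomial (Fin n) K) (MvPolynomial (Fin n) K) :=
            (θ : Derivation K (MvPolynomial (Fin n) K) (MvPolynomial (Fin n) K)) - ∑ j : Fin n, F j • rhoJ K n J j with hθ'
          have hθ'mem : θ' ∈ DerOf K n (QA K n (AJArr n J)) :=
            Submodule.sub_mem _ θ.2 (Submodule.sum_mem _ fun j _ =>
              Submodule.smul_mem _ _ (St6.rhoJ_mem J j))
          have hdvd : ∀ j ∈ St6.diagSet J k, St6.fac (K := K) k j ∣ θ' (X k) := by
            intro j hj
            rcases St6.mem_diagSet hj with ⟨hjJ, hjk⟩ | ⟨rfl, hkJ⟩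
            · have hd := St6.alp_dvd_deriv hθ'mem (St6.succ_mem_A (J := J) hjk hjJ)
              have halp : alp K n (j.succ, k.succ).1 (j.succ, k.succ).2 = X j - X k := by
                simp [alp, St6.varx_succ, Fin.succ_ne_zero]
              rw [halp, map_sub] at hd
              have hzj : θ' (X j) = 0 := h1 j (Fin.lt_def.mp hjk)
              rw [hzj, zero_sub] at hd
              have hfe : St6.fac (K := K) k j = X j - X k := by
                rw [St6.fac, if_neg (ne_of_lt hjk)]
              rw [hfe]
              exact dvd_neg.mp hd
            · have hd := St6.alp_dvd_deriv hθ'mem (St6.zero_succ_mem_A (J := J) hkJ)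
              have halp : alp K n ((0 : Fin (n + 1)), k.succ).1 ((0 : Fin (n + 1)), k.succ).2
                  = X k := by
                simp [alp, St6.varx_succ]
              rw [halp] at hd
              have hfe : St6.fac (K := K) k k = X k := by rw [St6.fac, if_pos rfl]
              rw [hfe]
              exact hd
          have hdiag : St6.diag (K := K) J k ∣ θ' (X k) := by
            rw [St6.diag]
            refine St6.prod_dvd_of_primes _ _ (fun j hj => St6.fac_prime hj) ?_ hdvd
            intro j hj j' hj' hne
            rw [St6.fac_eq_alp, St6.fac_eq_alp]
            exact St6.alp_not_dvd (St6.facPair_lt hj) (St6.facPair_lt hj')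
              (St6.facPair_injOn k hne)
          obtain ⟨w, hw⟩ := hdiag
          have hF0 : F k = 0 := h0 k (le_refl m)
          have hsum' : (∑ j : Fin n, Function.update F k w j • rhoJ K n J j)
              = (∑ j : Fin n, F j • rhoJ K n J j) + w • rhoJ K n J k := by
            have hterm : ∀ j : Fin n, Function.update F k w j • rhoJ K n J j
                = F j • rhoJ K n J j + (if j = k then w • rhoJ K n J k else 0) := by
              intro j
              by_cases hj : j = k
              · subst hj
                rw [Function.update_self, if_pos rfl, hF0, zero_smul, zero_add]
              · rw [Function.update_of_ne hj, if_neg hj, add_zero]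
            rw [Finset.sum_congr rfl fun j _ => hterm j, Finset.sum_add_distrib,
              Finset.sum_ite_eq' Finset.univ k, if_pos (Finset.mem_univ k)]
          refine ⟨Function.update F k w, ?_, ?_⟩
          · intro i hi
            have hik : i ≠ k := by
              intro h; subst h
              simp only [hk] at hi
              omega
            rw [Function.update_of_ne hik]
            exact h0 i (by omega)
          · intro i hi
            have happ : ((θ : Derivation K (MvPolynomial (Fin n) K) (MvPolynomial (Fin n) K))
                - ∑ j : Fin n, Function.update F k w j • rhoJ K n J j) (X i)
                = θ' (X i) - w * rhoJ K n J k (X i) := by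
              rw [hsum']
              have hrw : (θ : Derivation K (MvPolynomial (Fin n) K) (MvPolynomial (Fin n) K))
                  - ((∑ j : Fin n, F j • rhoJ K n J j) + w • rhoJ K n J k)
                  = θ' - w • rhoJ K n J k := by
                rw [hθ']; abel
              rw [hrw, Derivation.sub_apply, Derivation.smul_apply, smul_eq_mul]
            rcases Nat.lt_or_ge (i : ℕ) m with hlt | hge
            · have hik : i < k := Fin.lt_def.mpr hlt
              rw [happ, h1 i hlt, St6.rhoJ_apply_X_lt hik, mul_zero, sub_zero]
            · have hkv : (k : ℕ) = m := rfl
              have : i = k := Fin.ext (by omega)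
              subst this
              rw [happ, St6.rhoJ_diag, hw]
              ring
        · refine ⟨F, fun i hi => h0 i (by omega), fun i hi => h1 i ?_⟩
          have := i.isLt
          omega
    obtain ⟨F, h0, h1⟩ := claim n
    refine ⟨F, ?_⟩
    apply Subtype.ext
    have hz : ∀ i : Fin n,
        ((θ : Derivation K (MvPolynomial (Fin n) K) (MvPolynomial (Fin n) K)) - ∑ j : Fin n, F j • rhoJ K n J j) (X i) = 0 :=
      fun i => h1 i i.isLt
    have heq : (∑ j : Fin n, F j • rhoJ K n J j) = (θ : Derivation K (MvPolynomial (Fin n) K) (MvPolynomial (Fin n) K)) := by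
      apply MvPolynomial.derivation_ext
      intro i
      have := hz i
      rw [Derivation.sub_apply] at this
      have := sub_eq_zero.mp this
      exact this.symm
    exact heq
  let e := LinearEquiv.ofBijective Φ ⟨hinj, hsurj⟩
  refine ⟨Module.Basis.ofEquivFun e.symm, ?_⟩
  intro i
  have hb : (Module.Basis.ofEquivFun e.symm) i = Φ (Pi.single i 1) := by
    rw [show ((Module.Basis.ofEquivFun e.symm) i) = e.symm.symm (Pi.single i 1) from
      congrFun (Module.Basis.coe_ofEquivFun e.symm) i, LinearEquiv.symm_symm]
    rfl
  rw [hb, hΦval]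
  rw [Finset.sum_eq_single i]
  · rw [Pi.single_eq_same, one_smul]
  · intro j _ hji
    rw [Pi.single_eq_of_ne hji, zero_smul]
  · intro h; exact absurd (Finset.mem_univ i) h
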